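/- For any edge e = (a, v) ∈ E satisfying dist(x_i, y_i) = dist(x_i, a) + ℓ(a, v) + dist(v, y_i) for i = 1, 2, the following polynomial identity holds: H_{av}(x1, y1, x2, y2) = F(x2, a) · z_{av}² · F_disj(x1, a, v, y2) · F(v, y1). -/

import Mathlib

open scoped BigOperators

namespace DSP

variable {V : Type*} [Fintype V] [DecidableEq V]

/-- A path: a nonempty list of distinct vertices in which each consecutive
pair is joined by a directed edge. -/
def IsPath (E : V → V → Prop) (p : List V) : Prop :=
  p ≠ [] ∧ p.Nodup ∧ p.Chain' E

/-- A path from `x` to `y`. -/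
def IsPathFrom (E : V → V → Prop) (p : List V) (x y : V) : Prop :=
  IsPath E p ∧ p.head? = some x ∧ p.getLast? = some y

/-- The (ordered) list of edges of a path. -/
def pathEdges (p : List V) : List (V × V) := p.zip p.tail

/-- The weight of a path: the sum of its edge weights. -/
def pathWeight (ℓ : V → V → ℝ) (p : List V) : ℝ :=
  ((pathEdges p).map fun e => ℓ e.1 e.2).sum

/-- `dist x y` : the minimum weight of a path from `x` to `y`
(`⊤` if there is no such path). -/
noncomputable def dist (E : V → V → Prop) (ℓ : V → V → ℝ) (x y : V) : EReal :=
  sInf {w : EReal | ∃ p : List V, IsPathFrom E p x y ∧ (pathWeight ℓ p : EReal) = w}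

/-- A shortest path from `x` to `y` : a path from `x` to `y` whose weight
equals `dist x y`.  `Π(x, y)` is the set of all such paths. -/
def IsShortestPath (E : V → V → Prop) (ℓ : V → V → ℝ) (p : List V) (x y : V) : Prop :=
  IsPathFrom E p x y ∧ (pathWeight ℓ p : EReal) = dist E ℓ x y

/-- A directed cycle: a closed walk with at least one edge whose internal
vertices are pairwise distinct. -/
def IsCycle (E : V → V → Prop) (p : List V) : Prop :=
  2 ≤ p.length ∧ p.Chain' E ∧ p.head? = p.getLast? ∧ p.tail.Nodup

/-- `G` contains no directed cycle of negative or zero total weight. -/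
def NoNonposCycle (E : V → V → Prop) (ℓ : V → V → ℝ) : Prop :=
  ∀ p : List V, IsCycle E p → 0 < pathWeight ℓ p

/-- `G` is a DAG: it contains no directed cycle. -/
def Acyclic (E : V → V → Prop) : Prop :=
  ∀ p : List V, ¬ IsCycle E p

/-- `x` precedes `y` on the path `p` (`x = y` allowed). -/
def Precedes (p : List V) (x y : V) : Prop :=
  x ∈ p ∧ y ∈ p ∧ p.idxOf x ≤ p.idxOf y

/-- `subpath p x y` : the subpath `p[x, y]` of `p` from `x` to `y`
(for `x` preceding `y` on `p`). -/
def subpath (p : List V) (x y : V) : List V :=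
  (p.take (p.idxOf y + 1)).drop (p.idxOf x)

/-- Concatenation `p · q` of two paths (the last vertex of `p` coinciding
with the first vertex of `q`). -/
def pathConcat (p q : List V) : List V := p ++ q.tail

/-- A vertex is internal to a path if it lies on it and is not an endpoint. -/
def Internal (p : List V) (v : V) : Prop :=
  v ∈ p ∧ p.head? ≠ some v ∧ p.getLast? ≠ some v

/-- Paths `p1` from `x1` to `y1` and `p2` from `x2` to `y2` are internally
vertex-disjoint: they share no vertices except possibly those in
`{x1, y1} ∩ {x2, y2}`. -/
def InternallyDisjoint (p1 : List V) (x1 y1 : V) (p2 : List V) (x2 y2 : V) : Prop :=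
  ∀ u, u ∈ p1 → u ∈ p2 → u ∈ ({x1, y1} ∩ {x2, y2} : Set V)

/-- `(a, b)` is a twin-crossing pair for paths `p1`, `p2`. -/
def TwinCrossingPair (p1 p2 : List V) (a b : V) : Prop :=
  a ≠ b ∧ Precedes p1 a b ∧ Precedes p2 a b ∧ subpath p1 a b ≠ subpath p2 a b

/-- The swap operation `φ_{a,b}(P1, P2)`. -/
def swap (p1 : List V) (x1 y1 : V) (p2 : List V) (x2 y2 : V) (a b : V) :
    List V × List V :=
  (pathConcat (pathConcat (subpath p1 x1 a) (subpath p2 a b)) (subpath p1 b y1),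
   pathConcat (pathConcat (subpath p2 x2 a) (subpath p1 a b)) (subpath p2 b y2))

/-- The graph with vertex `u` deleted. -/
def deleteVertex (E : V → V → Prop) (u : V) : V → V → Prop :=
  fun a b => E a b ∧ a ≠ u ∧ b ≠ u

/-- `u` is distance-critical for `(x, y)` : deleting `u` strictly increases
the distance from `x` to `y`. -/
def DistCritical (E : V → V → Prop) (ℓ : V → V → ℝ) (x y u : V) : Prop :=
  dist E ℓ x y < dist (deleteVertex E u) ℓ x y

/-- `Δ(x, y)` : the distance-critical vertices for `(x, y)` together with the
endpoints `x`, `y`. -/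
def Delta (E : V → V → Prop) (ℓ : V → V → ℝ) (x y : V) : Set V :=
  {u | DistCritical E ℓ x y u} ∪ {x, y}

/-- `δ(x, y) = |Δ(x, y)|`. -/
noncomputable def deltaCard (E : V → V → Prop) (ℓ : V → V → ℝ) (x y : V) : ℕ :=
  (Delta E ℓ x y).ncard

/-- `(a, b)` is a concordant pair for paths `p1` (from `x1` to `y1`) and
`p2` (from `x2` to `y2`). -/
def ConcordantPair (p1 : List V) (x1 y1 : V) (p2 : List V) (x2 y2 : V) (a b : V) : Prop :=
  a ∉ ({x1, y1} ∩ {x2, y2} : Set V) ∧ b ∉ ({x1, y1} ∩ {x2, y2} : Set V) ∧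
  Precedes p1 a b ∧ Precedes p2 a b ∧
  InternallyDisjoint (subpath p1 x1 a) x1 a (subpath p2 x2 a) x2 a ∧
  InternallyDisjoint (subpath p1 b y1) b y1 (subpath p2 b y2) b y2

/-- `𝒞(P1, P2)` : the set of concordant pairs for `(P1, P2)`. -/
def concordantSet (p1 : List V) (x1 y1 : V) (p2 : List V) (x2 y2 : V) : Set (V × V) :=
  {c | ConcordantPair p1 x1 y1 p2 x2 y2 c.1 c.2}

/-- The interaction complexity `γ(P1, P2) = Σ_{(v,w) ∈ 𝒞(P1,P2)} δ(v, w)`. -/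
noncomputable def gamma (E : V → V → Prop) (ℓ : V → V → ℝ)
    (p1 : List V) (x1 y1 : V) (p2 : List V) (x2 y2 : V) : ℕ :=
  ∑ᶠ c ∈ concordantSet p1 x1 y1 p2 x2 y2, deltaCard E ℓ c.1 c.2

/-- `E(x, y)` : the set of edges lying on at least one shortest path
from `x` to `y`. -/
def shortestEdges (E : V → V → Prop) (ℓ : V → V → ℝ) (x y : V) : Set (V × V) :=
  {e | ∃ p : List V, IsShortestPath E ℓ p x y ∧ e ∈ pathEdges p}

section Poly

variable (F : Type*) [Field F] [CharP F 2]

/-- The monomial `f(P) = ∏_{e ∈ E(P)} z_e` of a path. -/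
noncomputable def pathMon (p : List V) : MvPolynomial (V × V) F :=
  ((pathEdges p).map fun e => MvPolynomial.X e).prod

/-- The enumerating polynomial of a collection of paths. -/
noncomputable def enumPoly (S : Set (List V)) : MvPolynomial (V × V) F :=
  ∑ᶠ p ∈ S, pathMon F p

/-- The enumerating polynomial of a collection of pairs of paths. -/
noncomputable def enumPoly2 (S : Set (List V × List V)) : MvPolynomial (V × V) F :=
  ∑ᶠ q ∈ S, pathMon F q.1 * pathMon F q.2

variable (E : V → V → Prop) (ℓ : V → V → ℝ)

/-- `F(x, y)` : the enumerating polynomial of `Π(x, y)`. -/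
noncomputable def Fpoly (x y : V) : MvPolynomial (V × V) F :=
  enumPoly F {p : List V | IsShortestPath E ℓ p x y}

end Poly

variable (E : V → V → Prop) (ℓ : V → V → ℝ)

/-- The collection of internally vertex-disjoint pairs
`(P1, P2) ∈ Π(x1, y1) × Π(x2, y2)`. -/
def disjPairs (x1 y1 x2 y2 : V) : Set (List V × List V) :=
  {q | IsShortestPath E ℓ q.1 x1 y1 ∧ IsShortestPath E ℓ q.2 x2 y2 ∧
       InternallyDisjoint q.1 x1 y1 q.2 x2 y2}

/-- Pairs `(P1, P2) ∈ Π(x1, y1) × Π(x2, y2)` such that `v ∈ V(P1) ∩ V(P2)`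
and the prefix `P1[x1, v]` and the suffix `P2[v, y2]` are internally
vertex-disjoint (defining `H_v`). -/
def HvPairs (v x1 y1 x2 y2 : V) : Set (List V × List V) :=
  {q | IsShortestPath E ℓ q.1 x1 y1 ∧ IsShortestPath E ℓ q.2 x2 y2 ∧
       v ∈ q.1 ∧ v ∈ q.2 ∧
       InternallyDisjoint (subpath q.1 x1 v) x1 v (subpath q.2 v y2) v y2}

/-- Pairs `(P1, P2) ∈ Π(x1, y1) × Π(x2, y2)` such that
`(a, v) ∈ E(P1) ∩ E(P2)` and the prefix `P1[x1, a]` and the suffix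
`P2[v, y2]` are internally vertex-disjoint (defining `H_{av}`). -/
def HavPairs (a v x1 y1 x2 y2 : V) : Set (List V × List V) :=
  {q | IsShortestPath E ℓ q.1 x1 y1 ∧ IsShortestPath E ℓ q.2 x2 y2 ∧
       (a, v) ∈ pathEdges q.1 ∧ (a, v) ∈ pathEdges q.2 ∧
       InternallyDisjoint (subpath q.1 x1 a) x1 a (subpath q.2 v y2) v y2}

/-- Pairs `(P1, P2) ∈ Π(x1, y1) × Π(x2, y2)` such that `v ∈ V(P1) ∩ V(P2)`
and the prefix `P1[x1, v]` is internally vertex-disjoint from both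
`P2[x2, v]` and `P2[v, y2]` (defining `D_v`). -/
def DvPairs (v x1 y1 x2 y2 : V) : Set (List V × List V) :=
  {q | IsShortestPath E ℓ q.1 x1 y1 ∧ IsShortestPath E ℓ q.2 x2 y2 ∧
       v ∈ q.1 ∧ v ∈ q.2 ∧
       InternallyDisjoint (subpath q.1 x1 v) x1 v (subpath q.2 x2 v) x2 v ∧
       InternallyDisjoint (subpath q.1 x1 v) x1 v (subpath q.2 v y2) v y2}

/-- Pairs `(P1, P2) ∈ Π(x1, y1) × Π(x2, y2)` with interaction complexity
`γ(P1, P2) ≤ k` (defining `F_{disj,k}`). -/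
def disjkPairs (k : ℤ) (x1 y1 x2 y2 : V) : Set (List V × List V) :=
  {q | IsShortestPath E ℓ q.1 x1 y1 ∧ IsShortestPath E ℓ q.2 x2 y2 ∧
       (gamma E ℓ q.1 x1 y1 q.2 x2 y2 : ℤ) ≤ k}

/-- Pairs `(P1, P2) ∈ Π(x1, y1) × Π(x2, y2)` with `γ(P1, P2) ≤ k` such that
`(v, w) ∈ 𝒞(P1, P2)` and `(v, w)` is the concordant pair appearing first
along `P1` (defining `D_{v,w,k}`). -/
def DvwkPairs (k : ℤ) (v w x1 y1 x2 y2 : V) : Set (List V × List V) :=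
  {q | IsShortestPath E ℓ q.1 x1 y1 ∧ IsShortestPath E ℓ q.2 x2 y2 ∧
       (gamma E ℓ q.1 x1 y1 q.2 x2 y2 : ℤ) ≤ k ∧
       (v, w) ∈ concordantSet q.1 x1 y1 q.2 x2 y2 ∧
       ∀ c ∈ concordantSet q.1 x1 y1 q.2 x2 y2, q.1.idxOf v ≤ q.1.idxOf c.1}

/-- Pairs `(P1, P2) ∈ Π(x1, y1) × Π(x2, y2)` such that `v` and `w` lie on
both paths with `v` preceding `w` on both, the subpaths `P1[x1, v]` and
`P2[w, y2]` are internally vertex-disjoint, and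
`γ(P1[v, y1], P2[x2, w]) ≤ k` (defining `H_{v,w,k}`). -/
def HvwkPairs (k : ℤ) (v w x1 y1 x2 y2 : V) : Set (List V × List V) :=
  {q | IsShortestPath E ℓ q.1 x1 y1 ∧ IsShortestPath E ℓ q.2 x2 y2 ∧
       Precedes q.1 v w ∧ Precedes q.2 v w ∧
       InternallyDisjoint (subpath q.1 x1 v) x1 v (subpath q.2 w y2) w y2 ∧
       (gamma E ℓ (subpath q.1 v y1) v y1 (subpath q.2 x2 w) x2 w : ℤ) ≤ k}

/-- As `HvwkPairs`, additionally requiring the edge `(a, v)` on both paths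
(disjointness imposed on `P1[x1, a]` and `P2[w, y2]`), defining `H_{av,w,k}`. -/
def HavwkPairs (k : ℤ) (a v w x1 y1 x2 y2 : V) : Set (List V × List V) :=
  {q | IsShortestPath E ℓ q.1 x1 y1 ∧ IsShortestPath E ℓ q.2 x2 y2 ∧
       Precedes q.1 v w ∧ Precedes q.2 v w ∧
       (a, v) ∈ pathEdges q.1 ∧ (a, v) ∈ pathEdges q.2 ∧
       InternallyDisjoint (subpath q.1 x1 a) x1 a (subpath q.2 w y2) w y2 ∧
       (gamma E ℓ (subpath q.1 v y1) v y1 (subpath q.2 x2 w) x2 w : ℤ) ≤ k}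

/-- As `HvwkPairs`, additionally requiring the edge `(w, b)` on both paths
(disjointness imposed on `P1[x1, v]` and `P2[b, y2]`), defining `H_{v,wb,k}`. -/
def HvwbkPairs (k : ℤ) (v w b x1 y1 x2 y2 : V) : Set (List V × List V) :=
  {q | IsShortestPath E ℓ q.1 x1 y1 ∧ IsShortestPath E ℓ q.2 x2 y2 ∧
       Precedes q.1 v w ∧ Precedes q.2 v w ∧
       (w, b) ∈ pathEdges q.1 ∧ (w, b) ∈ pathEdges q.2 ∧
       InternallyDisjoint (subpath q.1 x1 v) x1 v (subpath q.2 b y2) b y2 ∧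
       (gamma E ℓ (subpath q.1 v y1) v y1 (subpath q.2 x2 w) x2 w : ℤ) ≤ k}

/-- As `HvwkPairs`, additionally requiring both edges `(a, v)` and `(w, b)`
on both paths (disjointness imposed on `P1[x1, a]` and `P2[b, y2]`),
defining `H_{av,wb,k}`. -/
def HavwbkPairs (k : ℤ) (a v w b x1 y1 x2 y2 : V) : Set (List V × List V) :=
  {q | IsShortestPath E ℓ q.1 x1 y1 ∧ IsShortestPath E ℓ q.2 x2 y2 ∧
       Precedes q.1 v w ∧ Precedes q.2 v w ∧
       (a, v) ∈ pathEdges q.1 ∧ (a, v) ∈ pathEdges q.2 ∧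
       (w, b) ∈ pathEdges q.1 ∧ (w, b) ∈ pathEdges q.2 ∧
       InternallyDisjoint (subpath q.1 x1 a) x1 a (subpath q.2 b y2) b y2 ∧
       (gamma E ℓ (subpath q.1 v y1) v y1 (subpath q.2 x2 w) x2 w : ℤ) ≤ k}


/-! ### Auxiliary lemmas -/

section Aux

set_option linter.unusedSectionVars false

lemma pe_nil : pathEdges ([] : List V) = [] := rfl

lemma pe_single (a : V) : pathEdges [a] = [] := rfl

lemma pe_cons (a b : V) (l : List V) :
    pathEdges (a :: b :: l) = (a, b) :: pathEdges (b :: l) := rfl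

lemma pe_split : ∀ (s : List V) (c : V) (t : List V),
    pathEdges (s ++ c :: t) = pathEdges (s ++ [c]) ++ pathEdges (c :: t)
  | [], c, t => by simp [pe_single]
  | [a], c, t => by simp [pe_cons, pe_single]
  | a :: b :: s', c, t => by
    have := pe_split (b :: s') c t
    simpa [pe_cons] using congrArg (List.cons (a, b)) this

lemma pe_snoc : ∀ (s : List V) (a b : V), s.getLast? = some a →
    pathEdges (s ++ [b]) = pathEdges s ++ [(a, b)]
  | [], a, b, h => by simp at h
  | [x], a, b, h => by
      simp only [List.getLast?_singleton, Option.some.injEq] at h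
      subst h; simp [pe_cons, pe_single]
  | x :: y :: s', a, b, h => by
      have h' : (y :: s').getLast? = some a := by
        simpa [List.getLast?_cons_cons] using h
      have := pe_snoc (y :: s') a b h'
      simpa [pe_cons] using congrArg (List.cons (x, y)) this

lemma pe_join {s t : List V} {a v : V} (hs : s.getLast? = some a)
    (ht : t.head? = some v) :
    pathEdges (s ++ t) = pathEdges s ++ (a, v) :: pathEdges t := by
  obtain ⟨t', rfl⟩ : ∃ t', t = v :: t' := by
    cases t with
    | nil => simp at ht
    | cons x t' => exact ⟨t', by simpa using (by simpa using ht : x = v) ▸ rfl⟩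
  rw [pe_split s v t', pe_snoc s a v hs]
  simp

lemma pw_nil : pathWeight ℓ ([] : List V) = 0 := rfl

lemma pw_single (a : V) : pathWeight ℓ [a] = 0 := rfl

lemma pw_split (s : List V) (c : V) (t : List V) :
    pathWeight ℓ (s ++ c :: t) = pathWeight ℓ (s ++ [c]) + pathWeight ℓ (c :: t) := by
  unfold pathWeight
  rw [pe_split s c t, List.map_append, List.sum_append]

lemma pw_snoc {s : List V} {a : V} (b : V) (hs : s.getLast? = some a) :
    pathWeight ℓ (s ++ [b]) = pathWeight ℓ s + ℓ a b := by
  unfold pathWeight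
  rw [pe_snoc s a b hs]
  simp

lemma pw_join {s t : List V} {a v : V} (hs : s.getLast? = some a)
    (ht : t.head? = some v) :
    pathWeight ℓ (s ++ t) = pathWeight ℓ s + ℓ a v + pathWeight ℓ t := by
  unfold pathWeight
  rw [pe_join hs ht]
  simp [add_assoc]

lemma pm_join (F : Type*) [Field F] [CharP F 2] {s t : List V} {a v : V}
    (hs : s.getLast? = some a) (ht : t.head? = some v) :
    pathMon F (s ++ t) =
      pathMon F s * MvPolynomial.X (a, v) * pathMon F t := by
  unfold pathMon
  rw [pe_join hs ht]
  simp [mul_assoc, mul_comm, mul_left_comm]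

/-- Decomposition of a non-nodup list exhibiting a first repetition. -/
lemma exists_inner_cycle : ∀ (p : List V), ¬ p.Nodup →
    ∃ (u : List V) (c : V) (m t : List V),
      p = u ++ c :: (m ++ c :: t) ∧ (c :: m).Nodup
  | [], h => absurd List.nodup_nil h
  | a :: q, h => by
    by_cases hq : q.Nodup
    · have ha : a ∈ q := by
        by_contra ha
        exact h (List.nodup_cons.mpr ⟨ha, hq⟩)
      obtain ⟨m, t, rfl⟩ := List.append_of_mem ha
      refine ⟨[], a, m, t, by simp, ?_⟩
      have hm : m.Nodup := (List.nodup_append'.mp hq).1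
      have ham : a ∉ m := fun hmem =>
        (List.nodup_append'.mp hq).2.2 hmem (List.mem_cons_self)
      exact List.nodup_cons.mpr ⟨ham, hm⟩
    · obtain ⟨u, c, m, t, rfl, hcm⟩ := exists_inner_cycle q hq
      exact ⟨a :: u, c, m, t, rfl, hcm⟩

lemma chain'_snoc_of_mid {s : List V} {c : V} {t : List V}
    (h : List.Chain' E (s ++ c :: t)) : List.Chain' E (s ++ [c]) := by
  simp only [List.Chain'] at h ⊢
  rw [List.isChain_append] at h ⊢
  refine ⟨h.1, List.isChain_singleton c, fun x hx y hy => ?_⟩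
  simp only [List.head?_cons, Option.mem_def, Option.some.injEq] at hy
  subst hy
  exact h.2.2 x hx c (by simp)

lemma chain'_suffix_of_mid {s : List V} {c : V} {t : List V}
    (h : List.Chain' E (s ++ c :: t)) : List.Chain' E (c :: t) :=
  (List.isChain_append.mp h).2.1

/-- Removing an inner cycle from a walk. -/
lemma cycle_removal (hG : NoNonposCycle E ℓ) {u : List V} {c : V} {m t : List V}
    (hcm : (c :: m).Nodup) (hch : List.Chain' E (u ++ c :: (m ++ c :: t))) :
    List.Chain' E (u ++ c :: t) ∧
    (u ++ c :: t).head? = (u ++ c :: (m ++ c :: t)).head? ∧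
    (u ++ c :: t).getLast? = (u ++ c :: (m ++ c :: t)).getLast? ∧
    pathWeight ℓ (u ++ c :: t) < pathWeight ℓ (u ++ c :: (m ++ c :: t)) ∧
    (u ++ c :: t).length < (u ++ c :: (m ++ c :: t)).length := by
  have hsuffix : List.Chain' E (c :: (m ++ c :: t)) := chain'_suffix_of_mid E hch
  have hsuffix' : List.Chain' E ((c :: m) ++ c :: t) := by simpa using hsuffix
  have hct : List.Chain' E (c :: t) := chain'_suffix_of_mid E hsuffix'
  have hcmc : List.Chain' E ((c :: m) ++ [c]) := chain'_snoc_of_mid E hsuffix'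
  -- the extracted cycle
  have hcyc : IsCycle E ((c :: m) ++ [c]) := by
    refine ⟨by simp, hcmc, ?_, ?_⟩
    · rw [List.getLast?_concat]; rfl
    have := List.nodup_cons.mp hcm
    simp only [List.cons_append, List.tail_cons]
    rw [List.nodup_append']
    exact ⟨this.2, List.nodup_singleton c, by
      intro x hx hx'
      simp only [List.mem_singleton] at hx'
      subst hx'
      exact this.1 hx⟩
  have hCpos : 0 < pathWeight ℓ ((c :: m) ++ [c]) := hG _ hcyc
  -- chain' of the shortened walk
  have hch' : List.Chain' E (u ++ c :: t) := by
    simp only [List.Chain'] at hch ⊢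
    rw [List.isChain_append] at hch ⊢
    refine ⟨hch.1, hct, fun x hx y hy => ?_⟩
    simp only [List.head?_cons, Option.mem_def, Option.some.injEq] at hy
    subst hy
    exact hch.2.2 x hx c (by simp)
  refine ⟨hch', ?_, ?_, ?_, by simp only [List.length_append, List.length_cons]; omega⟩
  · simp [List.head?_append]
  · obtain ⟨z, hz⟩ : ∃ z, (c :: t).getLast? = some z := by
      cases h : (c :: t).getLast? with
      | none => simp at h
      | some z => exact ⟨z, rfl⟩
    have h1 : (c :: (m ++ c :: t)).getLast? = some z := by
      have : (c :: (m ++ c :: t)) = (c :: m) ++ (c :: t) := by simp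
      rw [this, List.getLast?_append, hz]; rfl
    rw [List.getLast?_append, List.getLast?_append, hz, h1]
  · have e1 : pathWeight ℓ (u ++ c :: (m ++ c :: t)) =
        pathWeight ℓ (u ++ [c]) + pathWeight ℓ (c :: (m ++ c :: t)) :=
      pw_split ℓ u c (m ++ c :: t)
    have e2 : pathWeight ℓ (c :: (m ++ c :: t)) =
        pathWeight ℓ ((c :: m) ++ [c]) + pathWeight ℓ (c :: t) := by
      have : (c :: (m ++ c :: t)) = (c :: m) ++ c :: t := by simp
      rw [this, pw_split ℓ (c :: m) c t]
    have e3 : pathWeight ℓ (u ++ c :: t) =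
        pathWeight ℓ (u ++ [c]) + pathWeight ℓ (c :: t) := pw_split ℓ u c t
    rw [e1, e2, e3]
    linarith

/-- Every closed walk has positive weight (given `NoNonposCycle`). -/
lemma closed_walk_pos (hG : NoNonposCycle E ℓ) :
    ∀ (n : ℕ) (p : List V), p.length ≤ n → 2 ≤ p.length → List.Chain' E p →
      p.head? = p.getLast? → 0 < pathWeight ℓ p := by
  intro n
  induction n with
  | zero => intro p hn h2 _ _; omega
  | succ n ih =>
    intro p hn h2 hch hcl
    have hnd : ¬ p.Nodup := by
      obtain ⟨h, rest, rfl⟩ : ∃ h rest, p = h :: rest := by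
        cases p with
        | nil => simp at h2
        | cons h rest => exact ⟨h, rest, rfl⟩
      have hrest : rest ≠ [] := by
        intro hr; subst hr; simp at h2
      have hgl : (h :: rest).getLast? = rest.getLast? := by
        cases rest with
        | nil => exact absurd rfl hrest
        | cons b l => simp [List.getLast?_cons_cons]
      rw [hgl] at hcl
      have hlast : h ∈ rest := by
        obtain ⟨hne, heq⟩ := List.mem_getLast?_eq_getLast (l := rest) (x := h)
          (by rw [← hcl]; rfl)
        rw [heq]
        exact List.getLast_mem hne
      simp [List.nodup_cons, hlast]
    obtain ⟨u, c, m, t, rfl, hcm⟩ := exists_inner_cycle _ hnd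
    obtain ⟨hch', hh, hl, hw, hlen⟩ := cycle_removal E ℓ hG hcm hch
    by_cases h2' : 2 ≤ (u ++ c :: t).length
    · have := ih (u ++ c :: t) (by omega) h2' hch' (by rw [hh, hl]; exact hcl)
      linarith
    · have h1 : (u ++ c :: t).length = 1 := by
        have : 1 ≤ (u ++ c :: t).length := by
          simp only [List.length_append, List.length_cons]; omega
        omega
      have hu : u = [] := by
        cases u with
        | nil => rfl
        | cons x u' => simp at h1
      have ht : t = [] := by
        cases t with
        | nil => rfl
        | cons x t' => subst hu; simp at h1
      subst hu; subst ht
      simpa [pw_single] using hw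

/-- Walk-to-path extraction: every walk dominates a path. -/
lemma walk_to_path (hG : NoNonposCycle E ℓ) :
    ∀ (n : ℕ) (p : List V) (x y : V), p.length ≤ n → p ≠ [] → List.Chain' E p →
      p.head? = some x → p.getLast? = some y →
      ∃ q : List V, IsPathFrom E q x y ∧ pathWeight ℓ q ≤ pathWeight ℓ p := by
  intro n
  induction n with
  | zero => intro p x y hn hne _ _ _; cases p with
      | nil => exact absurd rfl hne
      | cons a l => simp at hn
  | succ n ih =>
    intro p x y hn hne hch hh hl
    by_cases hnd : p.Nodup
    · exact ⟨p, ⟨⟨hne, hnd, hch⟩, hh, hl⟩, le_refl _⟩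
    · obtain ⟨u, c, m, t, rfl, hcm⟩ := exists_inner_cycle _ hnd
      obtain ⟨hch', hh', hl', hw, hlen⟩ := cycle_removal E ℓ hG hcm hch
      obtain ⟨q, hq, hwq⟩ := ih (u ++ c :: t) x y (by omega) (by simp) hch'
        (by rw [hh']; exact hh) (by rw [hl']; exact hl)
      exact ⟨q, hq, by linarith⟩

/-- `dist` is a lower bound for walk weights. -/
lemma dist_le_walk (hG : NoNonposCycle E ℓ) {p : List V} {x y : V}
    (hne : p ≠ []) (hch : List.Chain' E p) (hh : p.head? = some x)
    (hl : p.getLast? = some y) :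
    dist E ℓ x y ≤ (pathWeight ℓ p : EReal) := by
  obtain ⟨q, hq, hwq⟩ := walk_to_path E ℓ hG p.length p x y le_rfl hne hch hh hl
  calc dist E ℓ x y ≤ (pathWeight ℓ q : EReal) := sInf_le ⟨q, hq, rfl⟩
    _ ≤ (pathWeight ℓ p : EReal) := by exact_mod_cast hwq

lemma dist_le_path {p : List V} {x y : V} (hp : IsPathFrom E p x y) :
    dist E ℓ x y ≤ (pathWeight ℓ p : EReal) :=
  sInf_le ⟨p, hp, rfl⟩

lemma paths_finite (x y : V) : {p : List V | IsPathFrom E p x y}.Finite :=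
  Set.Finite.subset (List.finite_length_le V (Fintype.card V))
    (fun _ hp => hp.1.2.1.length_le_card)

lemma shortest_finite (x y : V) : {p : List V | IsShortestPath E ℓ p x y}.Finite :=
  (paths_finite E x y).subset (fun _ hp => hp.1)

lemma dist_attained {p : List V} {x y : V} (hp : IsPathFrom E p x y) :
    ∃ q : List V, IsShortestPath E ℓ q x y := by
  have hS : {w : EReal | ∃ p : List V, IsPathFrom E p x y ∧ (pathWeight ℓ p : EReal) = w}
      = (fun p => ((pathWeight ℓ p : ℝ) : EReal)) '' {p : List V | IsPathFrom E p x y} := by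
    ext w; simp [Set.mem_image, eq_comm]
  have hfin : {w : EReal | ∃ p : List V, IsPathFrom E p x y ∧
      (pathWeight ℓ p : EReal) = w}.Finite := by
    rw [hS]; exact (paths_finite E x y).image _
  have hne : {w : EReal | ∃ p : List V, IsPathFrom E p x y ∧
      (pathWeight ℓ p : EReal) = w}.Nonempty := ⟨_, p, hp, rfl⟩
  have hmem := Set.Nonempty.csInf_mem hne hfin
  obtain ⟨q, hq, hw⟩ := hmem
  exact ⟨q, hq, hw⟩

lemma split_shortest {x y a v : V} {s t : List V}
    (hp : IsShortestPath E ℓ ((s ++ [a]) ++ (v :: t)) x y)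
    (hd : dist E ℓ x y = dist E ℓ x a + (ℓ a v : EReal) + dist E ℓ v y) :
    IsShortestPath E ℓ (s ++ [a]) x a ∧ IsShortestPath E ℓ (v :: t) v y := by
  obtain ⟨⟨⟨hne, hnd, hch⟩, hh, hl⟩, hwdist⟩ := hp
  have hQne : s ++ [a] ≠ [] := by simp
  have hQlast : (s ++ [a]).getLast? = some a := List.getLast?_concat
  have hRhead : (v :: t).head? = some v := rfl
  have hQnd : (s ++ [a]).Nodup := (List.nodup_append'.mp hnd).1
  have hRnd : (v :: t).Nodup := (List.nodup_append'.mp hnd).2.1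
  have hchQ : List.Chain' E (s ++ [a]) := (List.isChain_append.mp hch).1
  have hchR : List.Chain' E (v :: t) := (List.isChain_append.mp hch).2.1
  have hQh : (s ++ [a]).head? = some x := by
    rw [List.head?_append, List.head?_eq_head hQne] at hh
    rw [List.head?_eq_head hQne]
    simpa using hh
  have hRl : (v :: t).getLast? = some y := by
    rw [List.getLast?_append] at hl
    obtain ⟨z, hz⟩ : ∃ z, (v :: t).getLast? = some z := by
      cases h : (v :: t).getLast? with
      | none => simp at h
      | some z => exact ⟨z, rfl⟩
    rw [hz] at hl ⊢
    simpa using hl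
  have hQpath : IsPathFrom E (s ++ [a]) x a := ⟨⟨hQne, hQnd, hchQ⟩, hQh, hQlast⟩
  have hRpath : IsPathFrom E (v :: t) v y := ⟨⟨by simp, hRnd, hchR⟩, rfl, hRl⟩
  have hw : pathWeight ℓ ((s ++ [a]) ++ (v :: t)) =
      pathWeight ℓ (s ++ [a]) + ℓ a v + pathWeight ℓ (v :: t) :=
    pw_join ℓ hQlast hRhead
  obtain ⟨q1, hq1⟩ := dist_attained E ℓ hQpath
  obtain ⟨q2, hq2⟩ := dist_attained E ℓ hRpath
  have hd1 : dist E ℓ x a = ((pathWeight ℓ q1 : ℝ) : EReal) := hq1.2.symm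
  have hd2 : dist E ℓ v y = ((pathWeight ℓ q2 : ℝ) : EReal) := hq2.2.symm
  have hle1 : pathWeight ℓ q1 ≤ pathWeight ℓ (s ++ [a]) := by
    have := dist_le_path E ℓ hQpath
    rw [hd1] at this
    exact_mod_cast this
  have hle2 : pathWeight ℓ q2 ≤ pathWeight ℓ (v :: t) := by
    have := dist_le_path E ℓ hRpath
    rw [hd2] at this
    exact_mod_cast this
  have heq : pathWeight ℓ (s ++ [a]) + ℓ a v + pathWeight ℓ (v :: t)
      = pathWeight ℓ q1 + ℓ a v + pathWeight ℓ q2 := by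
    have h1 : ((pathWeight ℓ (s ++ [a]) + ℓ a v + pathWeight ℓ (v :: t) : ℝ) : EReal)
        = ((pathWeight ℓ q1 + ℓ a v + pathWeight ℓ q2 : ℝ) : EReal) := by
      rw [← hw, hwdist, hd, hd1, hd2]
      push_cast
      ring
    exact_mod_cast h1
  have e1 : pathWeight ℓ (s ++ [a]) = pathWeight ℓ q1 := by linarith
  have e2 : pathWeight ℓ (v :: t) = pathWeight ℓ q2 := by linarith
  refine ⟨⟨hQpath, ?_⟩, ⟨hRpath, ?_⟩⟩
  · rw [hd1]; exact_mod_cast e1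
  · rw [hd2]; exact_mod_cast e2

/-- Two shortest paths `x → a` and `v → y` through the edge `(a, v)`
splitting `dist x y` are vertex-disjoint. -/
lemma shortest_disjoint (hG : NoNonposCycle E ℓ) {x y a v : V} (hE : E a v)
    (hd : dist E ℓ x y = dist E ℓ x a + (ℓ a v : EReal) + dist E ℓ v y)
    {Q R : List V} (hQ : IsShortestPath E ℓ Q x a) (hR : IsShortestPath E ℓ R v y) :
    ∀ u, u ∈ Q → u ∉ R := by
  intro u huQ huR
  obtain ⟨⟨⟨hQne, hQnd, hQch⟩, hQh, hQl⟩, hQw⟩ := hQ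
  obtain ⟨⟨⟨hRne, hRnd, hRch⟩, hRh, hRl⟩, hRw⟩ := hR
  obtain ⟨q1, q2, hQdec⟩ := List.append_of_mem huQ
  obtain ⟨r1, r2, hRdec⟩ := List.append_of_mem huR
  subst hQdec; subst hRdec
  -- last of (u :: q2) is a
  have hlast : (u :: q2).getLast? = some a := by
    obtain ⟨z, hz⟩ : ∃ z, (u :: q2).getLast? = some z := by
      cases h : (u :: q2).getLast? with
      | none => simp at h
      | some z => exact ⟨z, rfl⟩
    rw [List.getLast?_append, hz] at hQl
    rw [hz]
    simpa using hQl
  -- head of r1 ++ [u] is v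
  have hhead : (r1 ++ [u]).head? = some v := by
    cases r1 with
    | nil => simpa using hRh
    | cons b r1' =>
      simp only [List.cons_append, List.head?_cons]
      simpa using hRh
  -- pieces of chains
  have hchq1 : List.Chain' E q1 := (List.isChain_append.mp hQch).1
  have hchuq2 : List.Chain' E (u :: q2) := (List.isChain_append.mp hQch).2.1
  have hjunQ := (List.isChain_append.mp hQch).2.2
  have hchur2 : List.Chain' E (u :: r2) := (List.isChain_append.mp hRch).2.1
  have hchr1u : List.Chain' E (r1 ++ [u]) := chain'_snoc_of_mid E hRch
  -- the closed walk C
  have hchC : List.Chain' E ((u :: q2) ++ (r1 ++ [u])) := by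
    simp only [List.Chain']
    rw [List.isChain_append]
    refine ⟨hchuq2, hchr1u, fun z hz w hw => ?_⟩
    rw [hlast] at hz
    rw [hhead] at hw
    simp only [Option.mem_def, Option.some.injEq] at hz hw
    subst hz; subst hw
    exact hE
  have hCh : ((u :: q2) ++ (r1 ++ [u])).head? = some u := by simp
  have hCl : ((u :: q2) ++ (r1 ++ [u])).getLast? = some u := by
    rw [List.getLast?_append, List.getLast?_concat]; rfl
  have hCpos : 0 < pathWeight ℓ ((u :: q2) ++ (r1 ++ [u])) :=
    closed_walk_pos E ℓ hG _ _ le_rfl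
      (by simp only [List.length_append, List.length_cons]; omega) hchC
      (by rw [hCh, hCl])
  have hCw : pathWeight ℓ ((u :: q2) ++ (r1 ++ [u])) =
      pathWeight ℓ (u :: q2) + ℓ a v + pathWeight ℓ (r1 ++ [u]) :=
    pw_join ℓ hlast hhead
  -- the shortcut walk W1
  have hchW1 : List.Chain' E (q1 ++ u :: r2) := by
    simp only [List.Chain']
    rw [List.isChain_append]
    exact ⟨hchq1, hchur2, fun z hz w hw => hjunQ z hz w (by simpa using hw)⟩
  have hW1h : (q1 ++ u :: r2).head? = some x := by
    rw [List.head?_append] at hQh ⊢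
    simpa using hQh
  have hW1l : (q1 ++ u :: r2).getLast? = some y := by
    obtain ⟨z, hz⟩ : ∃ z, (u :: r2).getLast? = some z := by
      cases h : (u :: r2).getLast? with
      | none => simp at h
      | some z => exact ⟨z, rfl⟩
    rw [List.getLast?_append, hz] at hRl ⊢
    simpa using hRl
  have hW1 : dist E ℓ x y ≤ ((pathWeight ℓ (q1 ++ u :: r2) : ℝ) : EReal) :=
    dist_le_walk E ℓ hG (by simp) hchW1 hW1h hW1l
  -- weight bookkeeping
  have wQ : pathWeight ℓ (q1 ++ u :: q2) =
      pathWeight ℓ (q1 ++ [u]) + pathWeight ℓ (u :: q2) := pw_split ℓ q1 u q2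
  have wR : pathWeight ℓ (r1 ++ u :: r2) =
      pathWeight ℓ (r1 ++ [u]) + pathWeight ℓ (u :: r2) := pw_split ℓ r1 u r2
  have wW1 : pathWeight ℓ (q1 ++ u :: r2) =
      pathWeight ℓ (q1 ++ [u]) + pathWeight ℓ (u :: r2) := pw_split ℓ q1 u r2
  have hxy : dist E ℓ x y = ((pathWeight ℓ (q1 ++ u :: q2) + ℓ a v +
      pathWeight ℓ (r1 ++ u :: r2) : ℝ) : EReal) := by
    push_cast
    rw [hQw, hRw, hd]
  rw [hxy] at hW1
  have hreal : pathWeight ℓ (q1 ++ u :: q2) + ℓ a v + pathWeight ℓ (r1 ++ u :: r2)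
      ≤ pathWeight ℓ (q1 ++ u :: r2) := by exact_mod_cast hW1
  rw [hCw] at hCpos
  linarith

/-- Joining shortest paths `x → a` and `v → y` along the edge `(a, v)`. -/
lemma join_shortest (hG : NoNonposCycle E ℓ) {x y a v : V} (hE : E a v)
    (hd : dist E ℓ x y = dist E ℓ x a + (ℓ a v : EReal) + dist E ℓ v y)
    {Q R : List V} (hQ : IsShortestPath E ℓ Q x a) (hR : IsShortestPath E ℓ R v y) :
    IsShortestPath E ℓ (Q ++ R) x y := by
  have hdisj := shortest_disjoint E ℓ hG hE hd hQ hR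
  obtain ⟨⟨⟨hQne, hQnd, hQch⟩, hQh, hQl⟩, hQw⟩ := hQ
  obtain ⟨⟨⟨hRne, hRnd, hRch⟩, hRh, hRl⟩, hRw⟩ := hR
  have hnd : (Q ++ R).Nodup := List.nodup_append'.mpr ⟨hQnd, hRnd, fun u hu hr => hdisj u hu hr⟩
  have hch : List.Chain' E (Q ++ R) := by
    simp only [List.Chain']
    rw [List.isChain_append]
    refine ⟨hQch, hRch, fun z hz w hw => ?_⟩
    rw [hQl] at hz
    rw [hRh] at hw
    simp only [Option.mem_def, Option.some.injEq] at hz hw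
    subst hz; subst hw
    exact hE
  have hh : (Q ++ R).head? = some x := by
    rw [List.head?_append, hQh]
    rfl
  have hl : (Q ++ R).getLast? = some y := by
    rw [List.getLast?_append, hRl]
    rfl
  refine ⟨⟨⟨by simp [hQne], hnd, hch⟩, hh, hl⟩, ?_⟩
  rw [pw_join ℓ hQl hRh, hd, ← hQw, ← hRw]
  push_cast
  ring

lemma idx_last : ∀ (l : List V) (a : V), l.Nodup → l.getLast? = some a →
    l.idxOf a + 1 = l.length
  | [], a, _, h => by simp at h
  | [x], a, _, h => by
      simp only [List.getLast?_singleton, Option.some.injEq] at h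
      subst h; simp
  | x :: y :: l', a, hnd, h => by
      have h' : (y :: l').getLast? = some a := by
        simpa [List.getLast?_cons_cons] using h
      have ha : a ∈ y :: l' := by
        obtain ⟨hne, heq⟩ := List.mem_getLast?_eq_getLast (l := y :: l') (x := a)
          (by rw [h']; rfl)
        rw [heq]; exact List.getLast_mem hne
      have hxa : x ≠ a := fun hax => (List.nodup_cons.mp hnd).1 (hax ▸ ha)
      have := idx_last (y :: l') a (List.nodup_cons.mp hnd).2 h'
      rw [List.idxOf_cons_ne (y :: l') hxa]
      simp only [List.length_cons] at this ⊢
      omega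

/-- Computation of the left subpath of a concatenation. -/
lemma subpath_left {q r : List V} {x a : V} (hnd : (q ++ r).Nodup)
    (hqh : q.head? = some x) (hql : q.getLast? = some a) :
    subpath (q ++ r) x a = q := by
  have hqne : q ≠ [] := by rintro rfl; simp at hqh
  have hxq : (q ++ r).idxOf x = 0 := by
    obtain ⟨q', rfl⟩ : ∃ q', q = x :: q' := by
      cases q with
      | nil => simp at hqh
      | cons z q' => exact ⟨q', by simpa using (by simpa using hqh : z = x) ▸ rfl⟩
    simp
  have haq : a ∈ q := by
    obtain ⟨hne, heq⟩ := List.mem_getLast?_eq_getLast (l := q) (x := a) (by rw [hql]; rfl)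
    rw [heq]; exact List.getLast_mem hne
  have hidx : (q ++ r).idxOf a = q.idxOf a := List.idxOf_append_of_mem haq
  have hlen : q.idxOf a + 1 = q.length :=
    idx_last q a (List.nodup_append'.mp hnd).1 hql
  unfold subpath
  rw [hxq, hidx, hlen, List.take_left' rfl, List.drop_zero]

/-- Computation of the right subpath of a concatenation. -/
lemma subpath_right {q r : List V} {v y : V} (hnd : (q ++ r).Nodup)
    (hrh : r.head? = some v) (hrl : r.getLast? = some y) :
    subpath (q ++ r) v y = r := by
  have hrne : r ≠ [] := by rintro rfl; simp at hrh
  have hvr : v ∈ r := by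
    cases r with
    | nil => simp at hrh
    | cons z r' => simpa using Or.inl (by simpa using hrh : z = v).symm
  have hvq : v ∉ q := fun hvq => (List.nodup_append'.mp hnd).2.2 hvq hvr
  have hidxv : (q ++ r).idxOf v = q.length := by
    rw [List.idxOf_append_of_notMem hvq]
    obtain ⟨r', rfl⟩ : ∃ r', r = v :: r' := by
      cases r with
      | nil => simp at hrh
      | cons z r' => exact ⟨r', by simpa using (by simpa using hrh : z = v) ▸ rfl⟩
    simp
  have hyl : (q ++ r).getLast? = some y := by
    rw [List.getLast?_append, hrl]; rfl
  have hlen : (q ++ r).idxOf y + 1 = (q ++ r).length := idx_last _ y hnd hyl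
  unfold subpath
  rw [hlen, List.take_length, hidxv, List.drop_left]

/-- Any edge of a list yields a decomposition. -/
lemma mem_pathEdges_decomp : ∀ {p : List V} {a v : V}, (a, v) ∈ pathEdges p →
    ∃ s t, p = s ++ a :: v :: t
  | [], a, v, h => by simp [pe_nil] at h
  | [x], a, v, h => by simp [pe_single] at h
  | x :: y :: l, a, v, h => by
      rw [pe_cons, List.mem_cons] at h
      rcases h with h | h
      · obtain ⟨rfl, rfl⟩ := Prod.mk.injEq .. ▸ (Prod.ext_iff.mp h)
        exact ⟨[], l, rfl⟩
      · obtain ⟨s, t, hst⟩ := mem_pathEdges_decomp h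
        exact ⟨x :: s, t, by rw [List.cons_append, ← hst]⟩

lemma finsum_mem_prod_mul {α β : Type*} {M : Type*} [CommSemiring M] {s : Set α}
    {t : Set β} (hs : s.Finite) (ht : t.Finite) (f : α → M) (g : β → M) :
    (∑ᶠ z ∈ s ×ˢ t, f z.1 * g z.2) = (∑ᶠ x ∈ s, f x) * (∑ᶠ y ∈ t, g y) := by
  rw [← hs.coe_toFinset, ← ht.coe_toFinset, ← Finset.coe_product,
      finsum_mem_coe_finset, finsum_mem_coe_finset, finsum_mem_coe_finset,
      Finset.sum_mul_sum, Finset.sum_product]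

lemma finsum_mem_mul_const {α : Type*} {M : Type*} [CommSemiring M] {s : Set α}
    (hs : s.Finite) (c : M) (f : α → M) :
    (∑ᶠ x ∈ s, c * f x) = c * ∑ᶠ x ∈ s, f x := by
  rw [← hs.coe_toFinset, finsum_mem_coe_finset, finsum_mem_coe_finset, Finset.mul_sum]

end Aux

/-- For any edge `(a, v) ∈ E` with
`dist(xᵢ, yᵢ) = dist(xᵢ, a) + ℓ(a, v) + dist(v, yᵢ)` (`i = 1, 2`),
`H_{av}(x1, y1, x2, y2) = F(x2, a) · z_{av}² · F_disj(x1, a, v, y2) · F(v, y1)`. -/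
theorem Hav_eq_F_mul_sq_mul_Fdisj_mul_F
    (F : Type*) [Field F] [CharP F 2]
    (hG : NoNonposCycle E ℓ) (x1 y1 x2 y2 a v : V) (hE : E a v)
    (hd1 : dist E ℓ x1 y1 = dist E ℓ x1 a + (ℓ a v : EReal) + dist E ℓ v y1)
    (hd2 : dist E ℓ x2 y2 = dist E ℓ x2 a + (ℓ a v : EReal) + dist E ℓ v y2) :
    enumPoly2 F (HavPairs E ℓ a v x1 y1 x2 y2) =
      Fpoly F E ℓ x2 a * (MvPolynomial.X (a, v) : MvPolynomial (V × V) F) ^ 2 *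
        enumPoly2 F (disjPairs E ℓ x1 a v y2) * Fpoly F E ℓ v y1 := by
  classical
  have hS1fin := shortest_finite E ℓ x2 a
  have hS3fin := shortest_finite E ℓ v y1
  have hDfin : (disjPairs E ℓ x1 a v y2).Finite :=
    Set.Finite.subset ((shortest_finite E ℓ x1 a).prod (shortest_finite E ℓ v y2))
      (fun q hq => ⟨hq.1, hq.2.1⟩)
  -- the joining map
  set e : List V × ((List V × List V) × List V) → List V × List V :=
    fun z => (z.2.1.1 ++ z.2.2, z.1 ++ z.2.1.2) with he
  have hbij : Set.BijOn e
      (({p : List V | IsShortestPath E ℓ p x2 a}) ×ˢ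
        ((disjPairs E ℓ x1 a v y2) ×ˢ {p : List V | IsShortestPath E ℓ p v y1}))
      (HavPairs E ℓ a v x1 y1 x2 y2) := by
    constructor
    · -- MapsTo
      rintro ⟨q2, ⟨q1, r2⟩, r1⟩ ⟨hq2, ⟨hq1, hr2, hd12⟩, hr1⟩
      have hP1 : IsShortestPath E ℓ (q1 ++ r1) x1 y1 :=
        join_shortest E ℓ hG hE hd1 hq1 hr1
      have hP2 : IsShortestPath E ℓ (q2 ++ r2) x2 y2 :=
        join_shortest E ℓ hG hE hd2 hq2 hr2
      have hedge1 : (a, v) ∈ pathEdges (q1 ++ r1) := by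
        rw [pe_join hq1.1.2.2 hr1.1.2.1]; simp
      have hedge2 : (a, v) ∈ pathEdges (q2 ++ r2) := by
        rw [pe_join hq2.1.2.2 hr2.1.2.1]; simp
      refine ⟨hP1, hP2, hedge1, hedge2, ?_⟩
      rw [show (e (q2, (q1, r2), r1)).1 = q1 ++ r1 from rfl,
          show (e (q2, (q1, r2), r1)).2 = q2 ++ r2 from rfl,
          subpath_left hP1.1.1.2.1 hq1.1.2.1 hq1.1.2.2,
          subpath_right hP2.1.1.2.1 hr2.1.2.1 hr2.1.2.2]
      exact hd12
    constructor
    · -- InjOn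
      rintro ⟨q2, ⟨q1, r2⟩, r1⟩ ⟨hq2, ⟨hq1, hr2, hd12⟩, hr1⟩
        ⟨q2', ⟨q1', r2'⟩, r1'⟩ ⟨hq2', ⟨hq1', hr2', hd12'⟩, hr1'⟩ heq
      have h1 : q1 ++ r1 = q1' ++ r1' := congrArg Prod.fst heq
      have h2 : q2 ++ r2 = q2' ++ r2' := congrArg Prod.snd heq
      have hnd1 : (q1 ++ r1).Nodup := (join_shortest E ℓ hG hE hd1 hq1 hr1).1.1.2.1
      have hnd2 : (q2 ++ r2).Nodup := (join_shortest E ℓ hG hE hd2 hq2 hr2).1.1.2.1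
      have hnd1' : (q1' ++ r1').Nodup := h1 ▸ hnd1
      have hnd2' : (q2' ++ r2').Nodup := h2 ▸ hnd2
      have e1 : q1 = q1' := by
        rw [← subpath_left hnd1 hq1.1.2.1 hq1.1.2.2,
            ← subpath_left hnd1' hq1'.1.2.1 hq1'.1.2.2, h1]
      have e2 : r1 = r1' := by
        rw [← subpath_right hnd1 hr1.1.2.1 hr1.1.2.2,
            ← subpath_right hnd1' hr1'.1.2.1 hr1'.1.2.2, h1]
      have e3 : q2 = q2' := by
        rw [← subpath_left hnd2 hq2.1.2.1 hq2.1.2.2,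
            ← subpath_left hnd2' hq2'.1.2.1 hq2'.1.2.2, h2]
      have e4 : r2 = r2' := by
        rw [← subpath_right hnd2 hr2.1.2.1 hr2.1.2.2,
            ← subpath_right hnd2' hr2'.1.2.1 hr2'.1.2.2, h2]
      simp [e1, e2, e3, e4]
    · -- SurjOn
      rintro ⟨p1, p2⟩ ⟨h1, h2, he1, he2, hdisj⟩
      obtain ⟨s, t, rfl⟩ := mem_pathEdges_decomp he1
      obtain ⟨s', t', rfl⟩ := mem_pathEdges_decomp he2
      have hp1 : s ++ a :: v :: t = (s ++ [a]) ++ (v :: t) := by simp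
      have hp2 : s' ++ a :: v :: t' = (s' ++ [a]) ++ (v :: t') := by simp
      rw [hp1] at h1
      rw [hp2] at h2
      obtain ⟨hq1, hr1⟩ := split_shortest E ℓ h1 hd1
      obtain ⟨hq2, hr2⟩ := split_shortest E ℓ h2 hd2
      have hnd1 : ((s ++ [a]) ++ (v :: t)).Nodup := h1.1.1.2.1
      have hnd2 : ((s' ++ [a]) ++ (v :: t')).Nodup := h2.1.1.2.1
      refine ⟨(s' ++ [a], ((s ++ [a], v :: t'), v :: t)), ⟨hq2, ⟨hq1, hr2, ?_⟩, hr1⟩, ?_⟩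
      · have hs1 : subpath (s ++ a :: v :: t) x1 a = s ++ [a] := by
          rw [hp1]
          exact subpath_left hnd1 hq1.1.2.1 hq1.1.2.2
        have hs2 : subpath (s' ++ a :: v :: t') v y2 = v :: t' := by
          rw [hp2]
          exact subpath_right hnd2 hr2.1.2.1 hr2.1.2.2
        rw [hs1, hs2] at hdisj
        exact hdisj
      · simp [he]
  -- transfer the sum along the bijection
  have htrans : (∑ᶠ z ∈ (({p : List V | IsShortestPath E ℓ p x2 a}) ×ˢ
        ((disjPairs E ℓ x1 a v y2) ×ˢ {p : List V | IsShortestPath E ℓ p v y1})),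
        pathMon F z.1 * (((MvPolynomial.X (a, v) : MvPolynomial (V × V) F) ^ 2 *
          (pathMon F z.2.1.1 * pathMon F z.2.1.2)) * pathMon F z.2.2))
      = enumPoly2 F (HavPairs E ℓ a v x1 y1 x2 y2) := by
    refine finsum_mem_eq_of_bijOn e hbij ?_
    rintro ⟨q2, ⟨q1, r2⟩, r1⟩ ⟨hq2, ⟨hq1, hr2, hd12⟩, hr1⟩
    show _ = pathMon F (q1 ++ r1) * pathMon F (q2 ++ r2)
    rw [pm_join F hq1.1.2.2 hr1.1.2.1, pm_join F hq2.1.2.2 hr2.1.2.1]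
    ring
  rw [← htrans]
  rw [finsum_mem_prod_mul hS1fin (hDfin.prod hS3fin)
      (fun p => pathMon F p)
      (fun w => ((MvPolynomial.X (a, v) : MvPolynomial (V × V) F) ^ 2 *
        (pathMon F w.1.1 * pathMon F w.1.2)) * pathMon F w.2),
    finsum_mem_prod_mul hDfin hS3fin
      (fun dd => (MvPolynomial.X (a, v) : MvPolynomial (V × V) F) ^ 2 *
        (pathMon F dd.1 * pathMon F dd.2))
      (fun p => pathMon F p),
    finsum_mem_mul_const hDfin]
  show Fpoly F E ℓ x2 a * (_ * enumPoly2 F (disjPairs E ℓ x1 a v y2) * Fpoly F E ℓ v y1)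
      = _
  ring

end DSP
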